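/- Let f^m, f^n : ℝ^d → ℝ be continuous and ρ-weakly convex, let 0 < μ < 1/ρ, and define F^μ(w) = f^n_μ(w) − f^m_μ(w). Let (Ω, ℱ, P) be a probability space, let ε > 0, and let W, V̄ : Ω → ℝ^d be random vectors such that E‖∇F^μ(W)‖² ≤ min{1, μ⁻²}ε²/4 and E‖V̄ − v_{μf^n}(W)‖² ≤ ε²/4. Define w′(ω) = v_{μf^n}(W(ω)), w″(ω) = v_{μf^m}(W(ω)), ξ_n(ω) = μ⁻¹(W(ω) − w′(ω)), ξ_m(ω) = μ⁻¹(W(ω) − w″(ω)), and ξ(ω) = ξ_n(ω) − ξ_m(ω) = μ⁻¹(w″(ω) − w′(ω)). Then: (i) for every ω ∈ Ω and every u ∈ ℝ^d, f^n(u) ≥ f^n(w′(ω)) + ⟨ξ_n(ω), u − w′(ω)⟩ − (2μ)⁻¹‖u − w′(ω)‖² and f^m(u) ≥ f^m(w″(ω)) + ⟨ξ_m(ω), u − w″(ω)⟩ − (2μ)⁻¹‖u − w″(ω)‖² (so ξ(ω) ∈ ∂f^n(w′(ω)) − ∂f^m(w″(ω))); and (ii) E‖ξ‖ ≤ ε,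 E‖V̄ − w′‖ ≤ ε, and E‖V̄ − w″‖ ≤ ε — that is, V̄ is a nearly ε-critical point in expectation. -/

import Mathlib

open MeasureTheory
open scoped RealInnerProductSpace

lemma l2_bound {Ω : Type*} [MeasurableSpace Ω] (P : Measure Ω) [IsProbabilityMeasure P]
    (f : Ω → ℝ) (hf : ∀ ω, 0 ≤ f ω) (hint : Integrable (fun ω => f ω ^ 2) P)
    (c : ℝ) (hc : 0 ≤ c) (hle : ∫ ω, f ω ^ 2 ∂P ≤ c ^ 2) :
    Integrable f P ∧ ∫ ω, f ω ∂P ≤ c := by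
  have hmeas : AEStronglyMeasurable f P := by
    refine (Real.continuous_sqrt.comp_aestronglyMeasurable hint.1).congr ?_
    exact Filter.Eventually.of_forall fun ω => by
      simp [Function.comp, Real.sqrt_sq (hf ω)]
  have hmem : MemLp f 2 P := (memLp_two_iff_integrable_sq hmeas).2 hint
  refine ⟨hmem.integrable (by norm_num), ?_⟩
  have hpq : Real.HolderConjugate 2 2 := Real.holderConjugate_iff.mpr ⟨by norm_num, by norm_num⟩
  have h := integral_mul_le_Lp_mul_Lq_of_nonneg (μ := P) hpq
    (Filter.Eventually.of_forall hf) (Filter.Eventually.of_forall fun _ => zero_le_one)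
    (by simpa using hmem) (by simpa using memLp_const (μ := P) (1 : ℝ))
  simp only [mul_one, one_pow, integral_const, measure_univ, ENNReal.toReal_one, probReal_univ, smul_eq_mul,
    Real.one_rpow] at h
  have hrp : ∀ a : Ω, f a ^ (2:ℝ) = f a ^ (2:ℕ) := fun a => by
    rw [show (2:ℝ) = ((2:ℕ):ℝ) by norm_num, Real.rpow_natCast]
  simp only [hrp] at h
  have h2 : (∫ ω, f ω ^ 2 ∂P) ^ ((1:ℝ)/2) ≤ c := by
    calc (∫ ω, f ω ^ 2 ∂P) ^ ((1:ℝ)/2) ≤ (c ^ 2) ^ ((1:ℝ)/2) := by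
          apply Real.rpow_le_rpow (integral_nonneg fun ω => sq_nonneg _) hle (by norm_num)
      _ = c := by
          rw [← Real.rpow_natCast c 2, ← Real.rpow_mul hc]; norm_num
  linarith [h]

lemma prox_subgrad {d : ℕ} (f : EuclideanSpace ℝ (Fin d) → ℝ) (μ : ℝ) (hμ : 0 < μ)
    (v : EuclideanSpace ℝ (Fin d) → EuclideanSpace ℝ (Fin d))
    (hv : ∀ w u, f (v w) + ‖v w - w‖ ^ 2 / (2 * μ) ≤ f u + ‖u - w‖ ^ 2 / (2 * μ))
    (w u : EuclideanSpace ℝ (Fin d)) :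
    f u ≥ f (v w) + ⟪μ⁻¹ • (w - v w), u - v w⟫ - (2 * μ)⁻¹ * ‖u - v w‖ ^ 2 := by
  have h := hv w u
  have hexp : ‖u - w‖ ^ 2
      = ‖u - v w‖ ^ 2 + 2 * ⟪u - v w, v w - w⟫ + ‖v w - w‖ ^ 2 := by
    have := norm_add_sq_real (u - v w) (v w - w)
    rw [sub_add_sub_cancel] at this
    linarith
  have hip : ⟪μ⁻¹ • (w - v w), u - v w⟫ = μ⁻¹ * ⟪w - v w, u - v w⟫ :=
    real_inner_smul_left _ _ _
  have hip2 : ⟪w - v w, u - v w⟫ = -⟪u - v w, v w - w⟫ := by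
    rw [real_inner_comm, ← neg_sub (v w) w, inner_neg_right]
  rw [ge_iff_le, hip, hip2]
  have hμ' : (μ : ℝ) ≠ 0 := ne_of_gt hμ
  set A := ‖u - v w‖ ^ 2
  set B := ⟪u - v w, v w - w⟫
  set C := ‖v w - w‖ ^ 2
  have key : μ⁻¹ * (-B) - (2 * μ)⁻¹ * A = C / (2 * μ) - (A + 2 * B + C) / (2 * μ) := by
    field_simp; ring
  rw [hexp] at h
  linarith

/-- Let `f^m, f^n : ℝ^d → ℝ` be continuous and `ρ`-weakly convex, `0 < μ < 1/ρ` (encoded as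
`0 < μ` and `μρ < 1`), with proximal points `vm w = v_{μf^m}(w)`, `vn w = v_{μf^n}(w)`, so
that `∇F^μ(w) = μ⁻¹(vm w − vn w)`.  Let `W, V̄ : Ω → ℝ^d` be random vectors on a probability
space `(Ω, P)` with `E‖∇F^μ(W)‖² ≤ min{1, μ⁻²}ε²/4` and `E‖V̄ − vn(W)‖² ≤ ε²/4`.  Writing
`w′ = vn(W)`, `w″ = vm(W)`, `ξ_n = μ⁻¹(W − w′)`, `ξ_m = μ⁻¹(W − w″)`, `ξ = ξ_n − ξ_m`, then:
(i) for every `ω` and `u`, `ξ_n(ω)` (resp. `ξ_m(ω)`) satisfies the Fréchet-subgradient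
inequality for `f^n` at `w′(ω)` (resp. `f^m` at `w″(ω)`); and (ii) `E‖ξ‖ ≤ ε`,
`E‖V̄ − w′‖ ≤ ε`, `E‖V̄ − w″‖ ≤ ε`, i.e. `V̄` is a nearly `ε`-critical point in expectation. -/
theorem stmt7 (d : ℕ) (fm fn : EuclideanSpace ℝ (Fin d) → ℝ) (ρ : ℝ) (hρ : 0 ≤ ρ)
    (hcm : Continuous fm) (hcn : Continuous fn)
    (hwm : ConvexOn ℝ Set.univ (fun w => fm w + ρ / 2 * ‖w‖ ^ 2))
    (hwn : ConvexOn ℝ Set.univ (fun w => fn w + ρ / 2 * ‖w‖ ^ 2))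
    (μ : ℝ) (hμ : 0 < μ) (hμρ : μ * ρ < 1)
    (vm vn : EuclideanSpace ℝ (Fin d) → EuclideanSpace ℝ (Fin d))
    (hvm : ∀ w u, fm (vm w) + ‖vm w - w‖ ^ 2 / (2 * μ) ≤ fm u + ‖u - w‖ ^ 2 / (2 * μ))
    (hvn : ∀ w u, fn (vn w) + ‖vn w - w‖ ^ 2 / (2 * μ) ≤ fn u + ‖u - w‖ ^ 2 / (2 * μ))
    {Ω : Type*} [MeasurableSpace Ω] (P : Measure Ω) [IsProbabilityMeasure P]
    (ε : ℝ) (hε : 0 < ε)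
    (W V : Ω → EuclideanSpace ℝ (Fin d)) (hWmeas : Measurable W) (hVmeas : Measurable V)
    (hint1 : Integrable (fun ω => ‖μ⁻¹ • (vm (W ω) - vn (W ω))‖ ^ 2) P)
    (hint2 : Integrable (fun ω => ‖V ω - vn (W ω)‖ ^ 2) P)
    (hgrad : ∫ ω, ‖μ⁻¹ • (vm (W ω) - vn (W ω))‖ ^ 2 ∂P ≤ min 1 ((μ ^ 2)⁻¹) * ε ^ 2 / 4)
    (hclose : ∫ ω, ‖V ω - vn (W ω)‖ ^ 2 ∂P ≤ ε ^ 2 / 4) :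
    (∀ (ω : Ω) (u : EuclideanSpace ℝ (Fin d)),
        fn u ≥ fn (vn (W ω)) + ⟪μ⁻¹ • (W ω - vn (W ω)), u - vn (W ω)⟫
            - (2 * μ)⁻¹ * ‖u - vn (W ω)‖ ^ 2
      ∧ fm u ≥ fm (vm (W ω)) + ⟪μ⁻¹ • (W ω - vm (W ω)), u - vm (W ω)⟫
            - (2 * μ)⁻¹ * ‖u - vm (W ω)‖ ^ 2) ∧
    (∫ ω, ‖μ⁻¹ • (W ω - vn (W ω)) - μ⁻¹ • (W ω - vm (W ω))‖ ∂P ≤ ε) ∧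
    (∫ ω, ‖V ω - vn (W ω)‖ ∂P ≤ ε) ∧
    (∫ ω, ‖V ω - vm (W ω)‖ ∂P ≤ ε) := by
  have hμ' : (μ : ℝ) ≠ 0 := ne_of_gt hμ
  set g : Ω → ℝ := fun ω => ‖μ⁻¹ • (vm (W ω) - vn (W ω))‖ with hg
  have hgnn : ∀ ω, 0 ≤ g ω := fun ω => norm_nonneg _
  -- two L² bounds for the gradient norm
  have hb1 : ∫ ω, g ω ^ 2 ∂P ≤ (ε / 2) ^ 2 := by
    refine hgrad.trans ?_
    have := min_le_left (1:ℝ) ((μ ^ 2)⁻¹)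
    nlinarith [sq_nonneg ε]
  have hb2 : ∫ ω, g ω ^ 2 ∂P ≤ (ε / (2 * μ)) ^ 2 := by
    refine hgrad.trans ?_
    have := min_le_right (1:ℝ) ((μ ^ 2)⁻¹)
    have h1 : min 1 ((μ ^ 2)⁻¹) * ε ^ 2 / 4 ≤ (μ ^ 2)⁻¹ * ε ^ 2 / 4 := by
      nlinarith [sq_nonneg ε]
    refine h1.trans (le_of_eq ?_)
    field_simp; ring
  obtain ⟨hgi, hgle⟩ := l2_bound P g hgnn hint1 (ε / 2) (by positivity) hb1
  obtain ⟨-, hgle2⟩ := l2_bound P g hgnn hint1 (ε / (2 * μ)) (by positivity) hb2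
  set h : Ω → ℝ := fun ω => ‖V ω - vn (W ω)‖ with hh
  obtain ⟨hhi, hhle⟩ := l2_bound P h (fun ω => norm_nonneg _) hint2 (ε / 2) (by positivity)
    (hclose.trans (le_of_eq (by ring)))
  have hξeq : ∀ ω, μ⁻¹ • (W ω - vn (W ω)) - μ⁻¹ • (W ω - vm (W ω))
      = μ⁻¹ • (vm (W ω) - vn (W ω)) := fun ω => by
    rw [← smul_sub]; congr 1; abel
  refine ⟨fun ω u => ⟨prox_subgrad fn μ hμ vn hvn (W ω) u,
    prox_subgrad fm μ hμ vm hvm (W ω) u⟩, ?_, ?_, ?_⟩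
  · calc ∫ ω, ‖μ⁻¹ • (W ω - vn (W ω)) - μ⁻¹ • (W ω - vm (W ω))‖ ∂P
        = ∫ ω, g ω ∂P := by
          apply integral_congr_ae
          exact Filter.Eventually.of_forall fun ω => by
            show ‖μ⁻¹ • (W ω - vn (W ω)) - μ⁻¹ • (W ω - vm (W ω))‖ = g ω
            show _ = ‖μ⁻¹ • (vm (W ω) - vn (W ω))‖
            rw [hξeq ω]
      _ ≤ ε / 2 := hgle
      _ ≤ ε := by linarith
  · exact hhle.trans (by linarith)
  · have hptw : ∀ ω, ‖V ω - vm (W ω)‖ ≤ h ω + μ * g ω := by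
      intro ω
      have h1 : V ω - vm (W ω) = (V ω - vn (W ω)) + (vn (W ω) - vm (W ω)) := by abel
      have h2 : ‖vn (W ω) - vm (W ω)‖ = μ * g ω := by
        show _ = μ * ‖μ⁻¹ • (vm (W ω) - vn (W ω))‖
        rw [norm_smul, Real.norm_eq_abs, abs_of_pos (inv_pos.2 hμ), ← norm_neg, neg_sub]
        field_simp
      calc ‖V ω - vm (W ω)‖ ≤ ‖V ω - vn (W ω)‖ + ‖vn (W ω) - vm (W ω)‖ := by
            rw [h1]; exact norm_add_le _ _
        _ = h ω + μ * g ω := by rw [h2]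
    have hri : Integrable (fun ω => h ω + μ * g ω) P := hhi.add (hgi.const_mul μ)
    calc ∫ ω, ‖V ω - vm (W ω)‖ ∂P ≤ ∫ ω, (h ω + μ * g ω) ∂P := by
          apply integral_mono_of_nonneg (Filter.Eventually.of_forall fun ω => norm_nonneg _)
            hri (Filter.Eventually.of_forall hptw)
      _ = ∫ ω, h ω ∂P + μ * ∫ ω, g ω ∂P := by
          rw [integral_add hhi (hgi.const_mul μ), integral_const_mul]
      _ ≤ ε / 2 + μ * (ε / (2 * μ)) := by
          have := mul_le_mul_of_nonneg_left hgle2 hμ.le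
          linarith
      _ = ε := by field_simp; ring
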